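/- Let G be a finite graph, Γ ⊆ Ω(G), and Γ' a collection of independent sets of G with ⋃Γ' ⊆ ⋃Γ and ⋂Γ ⊆ ⋂Γ'. Then |⋃Γ'| + |⋂Γ'| ≤ |⋃Γ| + |⋂Γ|. -/
import Mathlib


open Finset

/-- Union of a finite collection of finite sets. -/
def collU {α : Type*} [DecidableEq α] (Γ : Finset (Finset α)) : Finset α :=
  Γ.sup id

/-- Intersection of a finite collection of finite sets
(equals the usual intersection when the collection is non-empty). -/
def collI {α : Type*} [DecidableEq α] (Γ : Finset (Finset α)) : Finset α :=
  (Γ.sup id).filter (fun x => ∀ S ∈ Γ, x ∈ S)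

/-- `e Γ = |⋃Γ| + |⋂Γ|` as an integer. -/
def collE {α : Type*} [DecidableEq α] (Γ : Finset (Finset α)) : ℤ :=
  (collU Γ).card + (collI Γ).card

/-- `F` is a hereditary König–Egerváry collection with common cardinality `a`. -/
def IsHKE {α : Type*} [DecidableEq α] (F : Finset (Finset α)) (a : ℕ) : Prop :=
  (∀ S ∈ F, S.card = a) ∧
  ∀ Γ ⊆ F, Γ.Nonempty → collE Γ = 2 * (a : ℤ)

/-- A finite set of vertices is independent in `G`. -/
def IsIndep {V : Type*} (G : SimpleGraph V) (S : Finset V) : Prop :=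
  ∀ x ∈ S, ∀ y ∈ S, ¬ G.Adj x y

/-- A maximum independent set of `G`. -/
def IsMaxIndep {V : Type*} (G : SimpleGraph V) (S : Finset V) : Prop :=
  IsIndep G S ∧ ∀ T : Finset V, IsIndep G T → T.card ≤ S.card

/-- A finite set of edges of `G` which is a matching (pairwise non-incident edges). -/
def IsMatchingSet {V : Type*} (G : SimpleGraph V) (M : Finset (Sym2 V)) : Prop :=
  (∀ e ∈ M, e ∈ G.edgeSet) ∧
  ∀ e ∈ M, ∀ f ∈ M, e ≠ f → ∀ v : V, v ∈ e → v ∉ f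

lemma mem_collU {α : Type*} [DecidableEq α] {Γ : Finset (Finset α)} {x : α} :
    x ∈ collU Γ ↔ ∃ S ∈ Γ, x ∈ S := by
  simp [collU, Finset.mem_sup]

lemma mem_collI {α : Type*} [DecidableEq α] {Γ : Finset (Finset α)} {x : α} :
    x ∈ collI Γ ↔ (∃ S ∈ Γ, x ∈ S) ∧ ∀ S ∈ Γ, x ∈ S := by
  simp [collI, Finset.mem_sup, Finset.mem_filter]

/-- If `W` is a maximum independent set, `Y` independent and disjoint from `W`,
then `Y` has at least `|Y|` neighbors inside `W`. -/
lemma base_lemma {V : Type*} [DecidableEq V] (G : SimpleGraph V) [DecidableRel G.Adj]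
    {W Y : Finset V} (hW : IsMaxIndep G W) (hY : IsIndep G Y) (hd : Disjoint Y W) :
    Y.card ≤ (W.filter (fun w => ∃ y ∈ Y, G.Adj y w)).card := by
  set NW := W.filter (fun w => ∃ y ∈ Y, G.Adj y w) with hNW
  have hNWsub : NW ⊆ W := filter_subset _ _
  have hZ : IsIndep G ((W \ NW) ∪ Y) := by
    intro x hx y hy hadj
    rcases mem_union.1 hx with hx | hx
    · rcases mem_union.1 hy with hy | hy
      · exact hW.1 x (sdiff_subset hx) y (sdiff_subset hy) hadj
      · exact (mem_sdiff.1 hx).2 (mem_filter.2 ⟨(mem_sdiff.1 hx).1, y, hy, hadj.symm⟩)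
    · rcases mem_union.1 hy with hy | hy
      · exact (mem_sdiff.1 hy).2 (mem_filter.2 ⟨(mem_sdiff.1 hy).1, x, hx, hadj⟩)
      · exact hY x hx y hy hadj
  have hcard := hW.2 _ hZ
  have hdisj2 : Disjoint (W \ NW) Y := hd.symm.mono_left sdiff_subset
  rw [card_union_of_disjoint hdisj2, card_sdiff_of_subset hNWsub] at hcard
  have := card_le_card hNWsub
  omega

/-- Key counting claim: if every member of `Γ` is a maximum independent set,
`Y` is independent and disjoint from `⋂Γ`, then `Y` has at least `|Y|`
neighbors inside `⋃Γ`. -/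
lemma claim_lemma {V : Type*} [DecidableEq V] (G : SimpleGraph V) [DecidableRel G.Adj]
    (Γ : Finset (Finset V)) (hne : Γ.Nonempty) :
    (∀ S ∈ Γ, IsMaxIndep G S) →
    ∀ Y : Finset V, IsIndep G Y → Disjoint Y (collI Γ) →
      Y.card ≤ ((collU Γ).filter (fun w => ∃ y ∈ Y, G.Adj y w)).card := by
  induction hne using Finset.Nonempty.cons_induction with
  | singleton W =>
    intro hΩ Y hY hd
    have hU : collU {W} = W := by simp [collU]
    have hI : collI {W} = W := by ext x; simp [mem_collI]
    rw [hU]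
    exact base_lemma G (hΩ W (mem_singleton_self W)) hY (hI ▸ hd)
  | cons W Γ₀ hWn hne0 ih =>
    intro hΩ Y hY hd
    have hWmax : IsMaxIndep G W := hΩ W (mem_cons_self W Γ₀)
    have hΩ₀ : ∀ S ∈ Γ₀, IsMaxIndep G S := fun S hS => hΩ S (mem_cons.2 (Or.inr hS))
    set Y₁ := Y \ W with hY₁
    set Y₂ := Y ∩ W with hY₂
    -- Y₂ is disjoint from collI Γ₀
    have hd₂ : Disjoint Y₂ (collI Γ₀) := by
      rw [disjoint_left]
      intro x hx hxI
      have hxI0 := mem_collI.1 hxI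
      have hxW : x ∈ W := (mem_inter.1 hx).2
      have : x ∈ collI (Finset.cons W Γ₀ hWn) := by
        refine mem_collI.2 ⟨⟨W, mem_cons_self W Γ₀, hxW⟩, ?_⟩
        intro S hS
        rcases mem_cons.1 hS with rfl | hS
        · exact hxW
        · exact hxI0.2 S hS
      exact (disjoint_left.1 hd) (mem_inter.1 hx).1 this
    have hIH := ih hΩ₀ Y₂ (fun x hx y hy => hY x (mem_inter.1 hx).1 y (mem_inter.1 hy).1) hd₂
    have hbase := base_lemma G hWmax
      (fun x hx y hy => hY x (sdiff_subset hx) y (sdiff_subset hy))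
      (show Disjoint (Y \ W) W from sdiff_disjoint)
    -- the two neighbor sets
    set A := W.filter (fun w => ∃ y ∈ Y₁, G.Adj y w) with hA
    set B := (collU Γ₀).filter (fun w => ∃ y ∈ Y₂, G.Adj y w) with hB
    have hAB : Disjoint A B := by
      rw [disjoint_left]
      intro w hwA hwB
      obtain ⟨hwW, _⟩ := mem_filter.1 hwA
      obtain ⟨_, y, hy, hadj⟩ := mem_filter.1 hwB
      exact hWmax.1 y (mem_inter.1 hy).2 w hwW hadj
    have hUsub : A ∪ B ⊆ (collU (Finset.cons W Γ₀ hWn)).filter (fun w => ∃ y ∈ Y, G.Adj y w) := by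
      intro w hw
      rcases mem_union.1 hw with hw | hw
      · obtain ⟨hwW, y, hy, hadj⟩ := mem_filter.1 hw
        exact mem_filter.2 ⟨mem_collU.2 ⟨W, mem_cons_self W Γ₀, hwW⟩, y, sdiff_subset hy, hadj⟩
      · obtain ⟨hwU, y, hy, hadj⟩ := mem_filter.1 hw
        obtain ⟨S, hS, hwS⟩ := mem_collU.1 hwU
        exact mem_filter.2 ⟨mem_collU.2 ⟨S, mem_cons.2 (Or.inr hS), hwS⟩,
          y, (mem_inter.1 hy).1, hadj⟩
    have hYcard : Y₁.card + Y₂.card = Y.card := by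
      rw [hY₁, hY₂, Finset.card_sdiff_add_card_inter]
    calc Y.card = Y₁.card + Y₂.card := hYcard.symm
      _ ≤ A.card + B.card := Nat.add_le_add hbase hIH
      _ = (A ∪ B).card := (card_union_of_disjoint hAB).symm
      _ ≤ _ := card_le_card hUsub

theorem stmt_11 {V : Type*} [Fintype V] [DecidableEq V] (G : SimpleGraph V)
    (Γ Γ' : Finset (Finset V)) (hΓ : Γ.Nonempty) (hΓ' : Γ'.Nonempty)
    (hΩ : ∀ S ∈ Γ, IsMaxIndep G S)
    (hind : ∀ S ∈ Γ', IsIndep G S)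
    (hU : collU Γ' ⊆ collU Γ) (hI : collI Γ ⊆ collI Γ') :
    (collU Γ').card + (collI Γ').card ≤ (collU Γ).card + (collI Γ).card := by
  classical
  obtain ⟨S₀, hS₀⟩ := hΓ'
  set X := collI Γ' \ collI Γ with hX
  have hXI' : X ⊆ collI Γ' := sdiff_subset
  have hI'sub : ∀ x ∈ collI Γ', ∀ S ∈ Γ', x ∈ S := fun x hx => (mem_collI.1 hx).2
  have hXindep : IsIndep G X := fun x hx y hy =>
    hind S₀ hS₀ x (hI'sub x (hXI' hx) S₀ hS₀) y (hI'sub y (hXI' hy) S₀ hS₀)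
  have hclaim := claim_lemma G Γ hΓ hΩ X hXindep (sdiff_disjoint)
  have hsub : (collU Γ).filter (fun w => ∃ y ∈ X, G.Adj y w) ⊆ collU Γ \ collU Γ' := by
    intro w hw
    obtain ⟨hwU, y, hyX, hadj⟩ := mem_filter.1 hw
    refine mem_sdiff.2 ⟨hwU, fun hwU' => ?_⟩
    obtain ⟨S, hS, hwS⟩ := mem_collU.1 hwU'
    exact hind S hS y (hI'sub y (hXI' hyX) S hS) w hwS hadj
  have h1 : X.card ≤ (collU Γ \ collU Γ').card := hclaim.trans (card_le_card hsub)
  have h2 : X.card + (collI Γ).card = (collI Γ').card :=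
    card_sdiff_add_card_eq_card hI
  have h3 : (collU Γ \ collU Γ').card + (collU Γ').card = (collU Γ).card :=
    card_sdiff_add_card_eq_card hU
  omega
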